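/- Let y be a meromorphic function on ℂ satisfying y(z+1) + y(z−1) = (b(z) y(z) + c(z))/y(z)² as an identity of meromorphic functions, where b and c are rational functions. Let ẑ ∈ ℂ be such that b and c are analytic at ẑ, ẑ+1, and ẑ+2, with c(ẑ) ≠ 0. Suppose y has a zero of order k ≥ 1 at ẑ, and that at ẑ − 1 the function y is either analytic or has a pole of order strictly less than k. Then: (i) y has a pole of order exactly 2k at ẑ + 1; (ii) y has a zero of order exactly k at ẑ + 2; and (iii) if moreover c(ẑ+2) ≠ c(ẑ), then y has a pole of order exactly 2k at ẑ + 3. -/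

import Mathlib

/-- Two functions agree off some countable set; for meromorphic functions on `ℂ` this is
equality as meromorphic functions. -/
def EqOffCountable (f g : ℂ → ℂ) : Prop :=
  ∃ S : Set ℂ, S.Countable ∧ ∀ z ∉ S, f z = g z

open Classical in
/-- The order of a meromorphic function at a point: positive order `k` is a zero of order
`k`, negative order `-m` is a pole of order `m` (junk value `0` if `f` is not meromorphic
at the point). -/
noncomputable def meroOrder (f : ℂ → ℂ) (z : ℂ) : WithTop ℤ :=
  if h : MeromorphicAt f z then meromorphicOrderAt f z else 0

open Filter Topology

lemma meroOrder_eq_order {f : ℂ → ℂ} {x : ℂ} (h : MeromorphicAt f x) :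
    meroOrder f x = meromorphicOrderAt f x := dif_pos h

lemma map_punctured_add (x c : ℂ) :
    Filter.map (· + c) (𝓝[≠] x) = 𝓝[≠] (x + c) := by
  simpa using (Homeomorph.addRight c).map_punctured_nhds_eq x

lemma ev_shift {P : ℂ → Prop} {x : ℂ} (c : ℂ) (h : ∀ᶠ w in 𝓝[≠] x, P w) :
    ∀ᶠ z in 𝓝[≠] (x + c), P (z - c) := by
  rw [← map_punctured_add x c, Filter.eventually_map]
  exact h.mono fun w hw => by simpa using hw

lemma mero_shift (f : ℂ → ℂ) (x c : ℂ) (hf : MeromorphicAt f (x + c)) :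
    MeromorphicAt (fun z => f (z + c)) x := by
  obtain ⟨n, hn⟩ := hf
  refine ⟨n, ?_⟩
  have h2 : AnalyticAt ℂ (fun z : ℂ => z + c) x := analyticAt_id.add analyticAt_const
  have h3 : AnalyticAt ℂ ((fun w => (w - (x + c)) ^ n • f w) ∘ (fun z : ℂ => z + c)) x :=
    AnalyticAt.comp (f := fun z : ℂ => z + c) hn h2
  refine h3.congr ?_
  filter_upwards with z
  simp [Function.comp, add_sub_add_right_eq_sub]

lemma rep_of_le_order {f : ℂ → ℂ} {x : ℂ} (hf : MeromorphicAt f x) (n : ℤ)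
    (hn : (n : WithTop ℤ) ≤ meromorphicOrderAt f x) :
    ∃ g : ℂ → ℂ, AnalyticAt ℂ g x ∧ ∀ᶠ z in 𝓝[≠] x, f z = (z - x) ^ n * g z := by
  rcases eq_or_ne (meromorphicOrderAt f x) ⊤ with h | h
  · refine ⟨fun _ => 0, analyticAt_const, ?_⟩
    filter_upwards [meromorphicOrderAt_eq_top_iff.mp h] with z hz
    simp [hz]
  · obtain ⟨m, hm⟩ := WithTop.ne_top_iff_exists.mp h
    obtain ⟨g, hg, -, hrep⟩ := (meromorphicOrderAt_eq_int_iff (n := m) hf).mp hm.symm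
    have hmn : n ≤ m := by rw [← hm] at hn; exact_mod_cast hn
    refine ⟨fun z => (z - x) ^ (m - n).toNat * g z,
      ((analyticAt_id.sub analyticAt_const).pow _).mul hg, ?_⟩
    filter_upwards [hrep, self_mem_nhdsWithin] with z hz hz'
    have hzx : z - x ≠ 0 := sub_ne_zero.mpr hz'
    rw [hz, smul_eq_mul, ← mul_assoc, ← zpow_natCast (z - x) ((m - n).toNat),
      Int.toNat_of_nonneg (by omega), ← zpow_add₀ hzx]
    ring_nf

lemma order_eq_of_rep {f g : ℂ → ℂ} {x : ℂ} (hf : MeromorphicAt f x) (n : ℤ)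
    (hg : AnalyticAt ℂ g x) (hgne : g x ≠ 0)
    (hrep : ∀ᶠ z in 𝓝[≠] x, f z = (z - x) ^ n * g z) : meromorphicOrderAt f x = n :=
  (meromorphicOrderAt_eq_int_iff (n := n) hf).mpr ⟨g, hg, hgne, by simpa [smul_eq_mul] using hrep⟩

lemma eqOff_to_eventually {f g : ℂ → ℂ} {x : ℂ}
    (hf : MeromorphicAt f x) (hg : MeromorphicAt g x)
    (h : EqOffCountable f g) : ∀ᶠ z in 𝓝[≠] x, f z = g z := by
  obtain ⟨S, hS, hfg⟩ := h
  have hd : MeromorphicAt (f - g) x := hf.sub hg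
  rcases eq_or_ne (meromorphicOrderAt (f - g) x) ⊤ with h | h
  · filter_upwards [meromorphicOrderAt_eq_top_iff.mp h] with z hz
    exact sub_eq_zero.mp hz
  · exfalso
    obtain ⟨m, hm⟩ := WithTop.ne_top_iff_exists.mp h
    obtain ⟨G, hG, hGne, hrep⟩ := (meromorphicOrderAt_eq_int_iff (n := m) hd).mp hm.symm
    have hev : ∀ᶠ z in 𝓝[≠] x, f z - g z ≠ 0 := by
      have hGne' : ∀ᶠ z in 𝓝 x, G z ≠ 0 := hG.continuousAt.eventually_ne hGne
      filter_upwards [hrep, hGne'.filter_mono nhdsWithin_le_nhds, self_mem_nhdsWithin]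
        with z h1 h2 h3
      have h4 : f z - g z = (z - x) ^ m * G z := by simpa [smul_eq_mul] using h1
      rw [h4]
      exact mul_ne_zero (zpow_ne_zero _ (sub_ne_zero.mpr h3)) h2
    obtain ⟨U, hU, hxU, hsub⟩ := mem_nhdsWithin.mp hev
    have hdense : Dense ((S ∪ {x} : Set ℂ))ᶜ :=
      (hS.union (Set.countable_singleton x)).dense_compl ℂ
    obtain ⟨z, hz, hzU⟩ := hdense.exists_mem_open hU ⟨x, hxU⟩
    have hzS : z ∉ S := fun hzS => hz (Or.inl hzS)
    have hzx : z ≠ x := fun e => hz (Or.inr e)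
    exact hsub ⟨hzU, hzx⟩ (sub_eq_zero.mpr (hfg z hzS))

lemma zc1 {t : ℂ} (k : ℕ) (ht : t ≠ 0) : t ^ (1 - (k:ℤ)) = t * (t ^ k)⁻¹ := by
  rw [zpow_sub₀ ht, zpow_one, zpow_natCast, div_eq_mul_inv]

lemma zc2 (t : ℂ) (k : ℕ) : t ^ (-(2 * (k:ℤ))) = ((t ^ k)⁻¹) ^ 2 := by
  rw [show -(2 * (k:ℤ)) = -((k * 2 : ℕ) : ℤ) by push_cast; ring, zpow_neg, zpow_natCast,
    pow_mul, inv_pow]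

lemma alg1 (t u Bz Cz g0 hm yp ym yz : ℂ) (hu : u ≠ 0) (hg : g0 ≠ 0)
    (e1 : yp + ym = (Bz * yz + Cz) / yz ^ 2) (e2 : yz = u * g0) (e3 : ym = t * u⁻¹ * hm) :
    yp = (u⁻¹) ^ 2 * ((Bz * u * g0 + Cz) / g0 ^ 2 - t * u * hm) := by
  subst e2 e3
  have h : yp = (Bz * (u * g0) + Cz) / (u * g0) ^ 2 - t * u⁻¹ * hm := by
    rw [← e1]; ring
  rw [h]; field_simp

lemma alg2 (u Bw Cw g1w g0w yp ym yw : ℂ) (hu : u ≠ 0) (hg1 : g1w ≠ 0)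
    (e1 : yp + ym = (Bw * yw + Cw) / yw ^ 2) (e2 : yw = (u⁻¹) ^ 2 * g1w) (e3 : ym = u * g0w) :
    yp = u * (-g0w + u * (Bw / g1w + u ^ 2 * Cw / g1w ^ 2)) := by
  subst e2 e3
  have h : yp = (Bw * ((u⁻¹) ^ 2 * g1w) + Cw) / ((u⁻¹) ^ 2 * g1w) ^ 2 - u * g0w := by
    rw [← e1]; ring
  rw [h]; field_simp; ring

lemma alg3 (u Bv Cv g2v g1v yp ym yv : ℂ) (hu : u ≠ 0) (hg2 : g2v ≠ 0)
    (e1 : yp + ym = (Bv * yv + Cv) / yv ^ 2) (e2 : yv = u * g2v) (e3 : ym = (u⁻¹) ^ 2 * g1v) :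
    yp = (u⁻¹) ^ 2 * ((Bv * u * g2v + Cv) / g2v ^ 2 - g1v) := by
  subst e2 e3
  have h : yp = (Bv * (u * g2v) + Cv) / (u * g2v) ^ 2 - (u⁻¹) ^ 2 * g1v := by
    rw [← e1]; ring
  rw [h]; field_simp

set_option maxHeartbeats 2000000 in
/-- Singularity pattern for meromorphic solutions of `y(z+1) + y(z-1) = (b y + c)/y²` with
rational coefficients: if `b`, `c` are analytic at `ẑ`, `ẑ+1`, `ẑ+2` with `c(ẑ) ≠ 0`, `y` has
a zero of order `k ≥ 1` at `ẑ`, and at `ẑ - 1` the function `y` is either analytic or has a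
pole of order strictly less than `k`, then (i) `y` has a pole of order exactly `2k` at `ẑ+1`,
(ii) `y` has a zero of order exactly `k` at `ẑ+2`, and (iii) if moreover `c(ẑ+2) ≠ c(ẑ)`
then `y` has a pole of order exactly `2k` at `ẑ+3`. -/
theorem meromorphic_singularity_pattern
    (y : ℂ → ℂ) (hy : MeromorphicOn y Set.univ)
    (b c : RatFunc ℂ)
    (heq : EqOffCountable (fun z => y (z + 1) + y (z - 1))
      (fun z => (b.eval (RingHom.id ℂ) z * y z + c.eval (RingHom.id ℂ) z) / y z ^ 2))
    (zhat : ℂ)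
    (hb0 : b.denom.eval zhat ≠ 0) (hb1 : b.denom.eval (zhat + 1) ≠ 0)
    (hb2 : b.denom.eval (zhat + 2) ≠ 0)
    (hc0 : c.denom.eval zhat ≠ 0) (hc1 : c.denom.eval (zhat + 1) ≠ 0)
    (hc2 : c.denom.eval (zhat + 2) ≠ 0)
    (hcval : c.eval (RingHom.id ℂ) zhat ≠ 0)
    (k : ℕ) (hk : 1 ≤ k) (hordz : meroOrder y zhat = ((k : ℤ) : WithTop ℤ))
    (hordm : ((-(k : ℤ) : ℤ) : WithTop ℤ) < meroOrder y (zhat - 1)) :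
    meroOrder y (zhat + 1) = ((-(2 * (k : ℤ)) : ℤ) : WithTop ℤ) ∧
      meroOrder y (zhat + 2) = ((k : ℤ) : WithTop ℤ) ∧
      (c.eval (RingHom.id ℂ) (zhat + 2) ≠ c.eval (RingHom.id ℂ) zhat →
        meroOrder y (zhat + 3) = ((-(2 * (k : ℤ)) : ℤ) : WithTop ℤ)) := by
  have hym : ∀ x : ℂ, MeromorphicAt y x := fun x => hy x (Set.mem_univ x)
  set B : ℂ → ℂ := fun z => b.eval (RingHom.id ℂ) z with hBdef
  set C : ℂ → ℂ := fun z => c.eval (RingHom.id ℂ) z with hCdef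
  have hBan : ∀ x : ℂ, b.denom.eval x ≠ 0 → AnalyticAt ℂ B x := fun x hx => by
    have h1 : AnalyticAt ℂ (fun z => b.num.eval z) x :=
      (AnalyticOnNhd.eval_polynomial (𝕜 := ℂ) b.num) x (Set.mem_univ x)
    have h2 : AnalyticAt ℂ (fun z => b.denom.eval z) x :=
      (AnalyticOnNhd.eval_polynomial (𝕜 := ℂ) b.denom) x (Set.mem_univ x)
    exact h1.div h2 hx
  have hCan : ∀ x : ℂ, c.denom.eval x ≠ 0 → AnalyticAt ℂ C x := fun x hx => by
    have h1 : AnalyticAt ℂ (fun z => c.num.eval z) x :=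
      (AnalyticOnNhd.eval_polynomial (𝕜 := ℂ) c.num) x (Set.mem_univ x)
    have h2 : AnalyticAt ℂ (fun z => c.denom.eval z) x :=
      (AnalyticOnNhd.eval_polynomial (𝕜 := ℂ) c.denom) x (Set.mem_univ x)
    exact h1.div h2 hx
  -- meromorphy of the two sides of the equation
  have hL : ∀ x : ℂ, MeromorphicAt (fun z => y (z + 1) + y (z - 1)) x := fun x => by
    have h1 : MeromorphicAt (fun z => y (z + 1)) x := mero_shift y x 1 (hym _)
    have h2 : MeromorphicAt (fun z => y (z - 1)) x := by
      have := mero_shift y x (-1) (hym _)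
      simpa [sub_eq_add_neg] using this
    exact h1.add h2
  have hR : ∀ x : ℂ, b.denom.eval x ≠ 0 → c.denom.eval x ≠ 0 →
      MeromorphicAt (fun z => B z * y z + C z) x := fun x hbx hcx =>
    ((hBan x hbx).meromorphicAt.mul (hym x)).add (hCan x hcx).meromorphicAt
  have hR' : ∀ x : ℂ, b.denom.eval x ≠ 0 → c.denom.eval x ≠ 0 →
      MeromorphicAt (fun z => (B z * y z + C z) / y z ^ 2) x := fun x hbx hcx =>
    (hR x hbx hcx).div ((hym x).pow 2)
  have hEv : ∀ x : ℂ, b.denom.eval x ≠ 0 → c.denom.eval x ≠ 0 →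
      ∀ᶠ z in 𝓝[≠] x, y (z + 1) + y (z - 1) = (B z * y z + C z) / y z ^ 2 :=
    fun x hbx hcx => eqOff_to_eventually (hL x) (hR' x hbx hcx) heq
  have hk0 : k ≠ 0 := by omega
  -- representation of `y` at `zhat`
  have hyz : MeromorphicAt y zhat := hym zhat
  have hordz' : meromorphicOrderAt y zhat = ((k : ℤ) : WithTop ℤ) := by
    rw [← meroOrder_eq_order hyz]; exact hordz
  obtain ⟨g0, hg0an, hg0ne, hrep0⟩ := (meromorphicOrderAt_eq_int_iff (n := (k : ℤ)) hyz).mp hordz'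
  have hrep0' : ∀ᶠ z in 𝓝[≠] zhat, y z = (z - zhat) ^ k * g0 z := by
    filter_upwards [hrep0] with z hz
    simpa [smul_eq_mul, zpow_natCast] using hz
  -- representation of `y` at `zhat - 1`
  have hym1 : MeromorphicAt y (zhat - 1) := hym _
  have hord1 : ((1 - (k : ℤ) : ℤ) : WithTop ℤ) ≤ meromorphicOrderAt y (zhat - 1) := by
    rw [← meroOrder_eq_order hym1]
    rcases eq_or_ne (meroOrder y (zhat - 1)) ⊤ with h | h
    · rw [h]; exact le_top
    · obtain ⟨m, hm⟩ := WithTop.ne_top_iff_exists.mp h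
      rw [← hm] at hordm ⊢
      have : -(k : ℤ) < m := by exact_mod_cast hordm
      exact_mod_cast (by omega : 1 - (k : ℤ) ≤ m)
  obtain ⟨hmin, hminan, hrepm⟩ := rep_of_le_order hym1 (1 - (k : ℤ)) hord1
  -- Step 1: from the equation at zhat, get the representation of y at zhat + 1
  have hg0ev : ∀ᶠ z in 𝓝[≠] zhat, g0 z ≠ 0 :=
    (hg0an.continuousAt.eventually_ne hg0ne).filter_mono nhdsWithin_le_nhds
  have hrepm' : ∀ᶠ z in 𝓝[≠] zhat, y (z - 1) = (z - zhat) ^ (1 - (k : ℤ)) * hmin (z - 1) := by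
    have h := ev_shift 1 hrepm
    rw [sub_add_cancel] at h
    filter_upwards [h] with z hz
    rw [hz, sub_sub_sub_cancel_right]
  set G1 : ℂ → ℂ := fun z =>
    (B z * (z - zhat) ^ k * g0 z + C z) / (g0 z) ^ 2
      - (z - zhat) * (z - zhat) ^ k * hmin (z - 1) with hG1def
  have hG1an : AnalyticAt ℂ G1 zhat := by
    have hd : AnalyticAt ℂ (fun z : ℂ => z - zhat) zhat := analyticAt_id.sub analyticAt_const
    have hmin' : AnalyticAt ℂ (fun z : ℂ => hmin (z - 1)) zhat := by
      have h2 : AnalyticAt ℂ (fun z : ℂ => z - 1) zhat := analyticAt_id.sub analyticAt_const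
      have h3 : AnalyticAt ℂ hmin ((fun z : ℂ => z - 1) zhat) := hminan
      exact AnalyticAt.comp (f := fun z : ℂ => z - 1) h3 h2
    exact ((((hBan zhat hb0).mul (hd.pow k)).mul hg0an).add (hCan zhat hc0)).div
      (hg0an.pow 2) (pow_ne_zero 2 hg0ne) |>.sub ((hd.mul (hd.pow k)).mul hmin')
  have hG1val : G1 zhat = C zhat / (g0 zhat) ^ 2 := by
    simp [hG1def, sub_self, zero_pow hk0]
  have ev1 : ∀ᶠ z in 𝓝[≠] zhat, y (z + 1) = (z - zhat) ^ (-(2 * (k : ℤ))) * G1 z := by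
    filter_upwards [hEv zhat hb0 hc0, hrep0', hrepm', hg0ev, self_mem_nhdsWithin]
      with z e1 e2 e3 hg hzx
    have ht : z - zhat ≠ 0 := sub_ne_zero.mpr hzx
    have hu : (z - zhat) ^ k ≠ 0 := pow_ne_zero _ ht
    rw [zc1 k ht] at e3
    rw [zc2]
    exact alg1 (z - zhat) ((z - zhat) ^ k) (B z) (C z) (g0 z) (hmin (z - 1))
      (y (z + 1)) (y (z - 1)) (y z) hu hg e1 e2 e3
  set g1 : ℂ → ℂ := fun w => G1 (w - 1) with hg1def
  have hrep1 : ∀ᶠ w in 𝓝[≠] (zhat + 1),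
      y w = (w - (zhat + 1)) ^ (-(2 * (k : ℤ))) * g1 w := by
    have h := ev_shift 1 ev1
    filter_upwards [h] with w hw
    rw [sub_add_cancel] at hw
    rw [hw, hg1def]
    congr 2
    ring
  have hg1an : AnalyticAt ℂ g1 (zhat + 1) := by
    have h2 : AnalyticAt ℂ (fun w : ℂ => w - 1) (zhat + 1) := analyticAt_id.sub analyticAt_const
    have h3 : AnalyticAt ℂ G1 ((fun w : ℂ => w - 1) (zhat + 1)) := by
      simpa [add_sub_cancel_right] using hG1an
    exact AnalyticAt.comp (f := fun z : ℂ => z - 1) h3 h2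
  have hg1val : g1 (zhat + 1) = C zhat / (g0 zhat) ^ 2 := by
    rw [hg1def]; simp only [add_sub_cancel_right]; exact hG1val
  have hg1ne : g1 (zhat + 1) ≠ 0 := by
    rw [hg1val]; exact div_ne_zero hcval (pow_ne_zero 2 hg0ne)
  have hord_p1 : meromorphicOrderAt y (zhat + 1) = ((-(2 * (k : ℤ)) : ℤ) : WithTop ℤ) :=
    order_eq_of_rep (hym (zhat + 1)) _ hg1an hg1ne hrep1
  -- Step 2: from the equation at zhat + 1, get the representation of y at zhat + 2
  have hg1ev : ∀ᶠ w in 𝓝[≠] (zhat + 1), g1 w ≠ 0 :=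
    (hg1an.continuousAt.eventually_ne hg1ne).filter_mono nhdsWithin_le_nhds
  have hrep0s : ∀ᶠ w in 𝓝[≠] (zhat + 1), y (w - 1) = (w - (zhat + 1)) ^ k * g0 (w - 1) := by
    have h := ev_shift 1 hrep0'
    filter_upwards [h] with w hw
    rw [hw]
    congr 2
    ring
  set G2 : ℂ → ℂ := fun w =>
    -g0 (w - 1) + (w - (zhat + 1)) ^ k *
      (B w / g1 w + ((w - (zhat + 1)) ^ k) ^ 2 * C w / (g1 w) ^ 2) with hG2def
  have hG2an : AnalyticAt ℂ G2 (zhat + 1) := by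
    have hd : AnalyticAt ℂ (fun w : ℂ => w - (zhat + 1)) (zhat + 1) :=
      analyticAt_id.sub analyticAt_const
    have hg0' : AnalyticAt ℂ (fun w : ℂ => g0 (w - 1)) (zhat + 1) := by
      have h2 : AnalyticAt ℂ (fun w : ℂ => w - 1) (zhat + 1) := analyticAt_id.sub analyticAt_const
      have h3 : AnalyticAt ℂ g0 ((fun w : ℂ => w - 1) (zhat + 1)) := by
        simpa [add_sub_cancel_right] using hg0an
      exact AnalyticAt.comp (f := fun z : ℂ => z - 1) h3 h2
    exact hg0'.neg.add ((hd.pow k).mul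
      (((hBan _ hb1).div hg1an hg1ne).add
        ((((hd.pow k).pow 2).mul (hCan _ hc1)).div (hg1an.pow 2) (pow_ne_zero 2 hg1ne))))
  have hG2val : G2 (zhat + 1) = -g0 zhat := by
    simp [hG2def, sub_self, zero_pow hk0, add_sub_cancel_right]
  have ev2 : ∀ᶠ w in 𝓝[≠] (zhat + 1), y (w + 1) = (w - (zhat + 1)) ^ k * G2 w := by
    filter_upwards [hEv (zhat + 1) hb1 hc1, hrep1, hrep0s, hg1ev, self_mem_nhdsWithin]
      with w e1 e2 e3 hg hwx
    have ht : w - (zhat + 1) ≠ 0 := sub_ne_zero.mpr hwx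
    have hu : (w - (zhat + 1)) ^ k ≠ 0 := pow_ne_zero _ ht
    rw [zc2] at e2
    exact alg2 ((w - (zhat + 1)) ^ k) (B w) (C w) (g1 w) (g0 (w - 1))
      (y (w + 1)) (y (w - 1)) (y w) hu hg e1 e2 e3
  set g2 : ℂ → ℂ := fun v => G2 (v - 1) with hg2def
  have hrep2 : ∀ᶠ v in 𝓝[≠] (zhat + 2), y v = (v - (zhat + 2)) ^ k * g2 v := by
    have h := ev_shift 1 ev2
    rw [show zhat + 1 + 1 = zhat + 2 by ring] at h
    filter_upwards [h] with v hv
    rw [sub_add_cancel] at hv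
    rw [hv, hg2def]
    congr 2
    ring
  have hg2an : AnalyticAt ℂ g2 (zhat + 2) := by
    have h2 : AnalyticAt ℂ (fun v : ℂ => v - 1) (zhat + 2) := analyticAt_id.sub analyticAt_const
    have h3 : AnalyticAt ℂ G2 ((fun v : ℂ => v - 1) (zhat + 2)) := by
      simpa [show zhat + 2 - 1 = zhat + 1 by ring] using hG2an
    exact AnalyticAt.comp (f := fun z : ℂ => z - 1) h3 h2
  have hg2val : g2 (zhat + 2) = -g0 zhat := by
    rw [hg2def]; simp only [show zhat + 2 - 1 = zhat + 1 by ring]; exact hG2val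
  have hg2ne : g2 (zhat + 2) ≠ 0 := by
    rw [hg2val]; exact neg_ne_zero.mpr hg0ne
  have hord_p2 : meromorphicOrderAt y (zhat + 2) = (((k : ℤ) : ℤ) : WithTop ℤ) := by
    refine order_eq_of_rep (hym (zhat + 2)) _ hg2an hg2ne ?_
    filter_upwards [hrep2] with v hv
    rw [hv, zpow_natCast]
  -- Step 3: from the equation at zhat + 2, get the representation of y at zhat + 3
  have hg2ev : ∀ᶠ v in 𝓝[≠] (zhat + 2), g2 v ≠ 0 :=
    (hg2an.continuousAt.eventually_ne hg2ne).filter_mono nhdsWithin_le_nhds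
  have hrep1s : ∀ᶠ v in 𝓝[≠] (zhat + 2),
      y (v - 1) = (v - (zhat + 2)) ^ (-(2 * (k : ℤ))) * g1 (v - 1) := by
    have h := ev_shift 1 hrep1
    rw [show zhat + 1 + 1 = zhat + 2 by ring] at h
    filter_upwards [h] with v hv
    rw [hv]
    congr 2
    ring
  set G3 : ℂ → ℂ := fun v =>
    (B v * (v - (zhat + 2)) ^ k * g2 v + C v) / (g2 v) ^ 2 - g1 (v - 1) with hG3def
  have hG3an : AnalyticAt ℂ G3 (zhat + 2) := by
    have hd : AnalyticAt ℂ (fun v : ℂ => v - (zhat + 2)) (zhat + 2) :=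
      analyticAt_id.sub analyticAt_const
    have hg1' : AnalyticAt ℂ (fun v : ℂ => g1 (v - 1)) (zhat + 2) := by
      have h2 : AnalyticAt ℂ (fun v : ℂ => v - 1) (zhat + 2) := analyticAt_id.sub analyticAt_const
      have h3 : AnalyticAt ℂ g1 ((fun v : ℂ => v - 1) (zhat + 2)) := by
        simpa [show zhat + 2 - 1 = zhat + 1 by ring] using hg1an
      exact AnalyticAt.comp (f := fun z : ℂ => z - 1) h3 h2
    exact ((((hBan _ hb2).mul (hd.pow k)).mul hg2an).add (hCan _ hc2)).div
      (hg2an.pow 2) (pow_ne_zero 2 hg2ne) |>.sub hg1'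
  have hG3val : G3 (zhat + 2) = (C (zhat + 2) - C zhat) / (g0 zhat) ^ 2 := by
    have h1 : G3 (zhat + 2) = C (zhat + 2) / (g2 (zhat + 2)) ^ 2 - g1 (zhat + 2 - 1) := by
      simp [hG3def, sub_self, zero_pow hk0]
    rw [h1, hg2val, show zhat + 2 - 1 = zhat + 1 by ring, hg1val]
    rw [neg_pow, show (-1 : ℂ) ^ 2 * (g0 zhat) ^ 2 = (g0 zhat) ^ 2 by ring]
    rw [div_sub_div_same]
  have ev3 : ∀ᶠ v in 𝓝[≠] (zhat + 2),
      y (v + 1) = (v - (zhat + 2)) ^ (-(2 * (k : ℤ))) * G3 v := by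
    filter_upwards [hEv (zhat + 2) hb2 hc2, hrep2, hrep1s, hg2ev, self_mem_nhdsWithin]
      with v e1 e2 e3 hg hvx
    have ht : v - (zhat + 2) ≠ 0 := sub_ne_zero.mpr hvx
    have hu : (v - (zhat + 2)) ^ k ≠ 0 := pow_ne_zero _ ht
    rw [zc2] at e3
    rw [zc2]
    exact alg3 ((v - (zhat + 2)) ^ k) (B v) (C v) (g2 v) (g1 (v - 1))
      (y (v + 1)) (y (v - 1)) (y v) hu hg e1 e2 e3
  refine ⟨by rw [meroOrder_eq_order (hym (zhat + 1))]; exact hord_p1,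
    by rw [meroOrder_eq_order (hym (zhat + 2))]; exact_mod_cast hord_p2, fun hne => ?_⟩
  set g3 : ℂ → ℂ := fun w => G3 (w - 1) with hg3def
  have hrep3 : ∀ᶠ w in 𝓝[≠] (zhat + 3),
      y w = (w - (zhat + 3)) ^ (-(2 * (k : ℤ))) * g3 w := by
    have h := ev_shift 1 ev3
    rw [show zhat + 2 + 1 = zhat + 3 by ring] at h
    filter_upwards [h] with w hw
    rw [sub_add_cancel] at hw
    rw [hw, hg3def]
    congr 2
    ring
  have hg3an : AnalyticAt ℂ g3 (zhat + 3) := by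
    have h2 : AnalyticAt ℂ (fun w : ℂ => w - 1) (zhat + 3) := analyticAt_id.sub analyticAt_const
    have h3 : AnalyticAt ℂ G3 ((fun w : ℂ => w - 1) (zhat + 3)) := by
      simpa [show zhat + 3 - 1 = zhat + 2 by ring] using hG3an
    exact AnalyticAt.comp (f := fun z : ℂ => z - 1) h3 h2
  have hg3ne : g3 (zhat + 3) ≠ 0 := by
    rw [hg3def]
    simp only [show zhat + 3 - 1 = zhat + 2 by ring]
    rw [hG3val]
    exact div_ne_zero (sub_ne_zero.mpr hne) (pow_ne_zero 2 hg0ne)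
  rw [meroOrder_eq_order (hym (zhat + 3))]
  exact order_eq_of_rep (hym (zhat + 3)) _ hg3an hg3ne hrep3
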